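/- arXiv:2310.11359 — 3 statements merged into one kernel-verified Lean document; each statement's English description precedes it below -/
import Mathlib

section
/- Let n ≥ 1, 1 ≤ k ≤ n, and let v₁,…,v_k ∈ ℤⁿ. For every integer d, the following are equivalent: (i) d divides det(v₁ | … | v_k | w_{k+1} | … | w_n) for every choice of vectors w_{k+1},…,w_n ∈ ℤⁿ; (ii) d divides every k×k minor of the n×k integer matrix (v₁ | … | v_k). Consequently, the integral index D_IA(v₁,…,v_k), defined as the greatest common divisor of all the determinants in (i), equals the greatest common divisor of all k×k minors of (v₁ | … | v_k). -/
open scoped Matrix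


private noncomputable def cNew (k m : ℕ) (c : Fin (m + 1) → Fin (k + (m + 1)))
    (i : Fin (k + (m + 1))) (t : Fin m) : Fin (k + m) :=
  if h : c ⟨(t : ℕ), Nat.lt_succ_of_lt t.isLt⟩ = i then ⟨(t : ℕ), by have := t.isLt; omega⟩
  else (Fin.exists_succAbove_eq h).choose

private noncomputable def aNew (k m : ℕ) (a : Fin (m + 1) → ℤ) (c : Fin (m + 1) → Fin (k + (m + 1)))
    (i : Fin (k + (m + 1))) (t : Fin m) : ℤ :=
  if c ⟨(t : ℕ), Nat.lt_succ_of_lt t.isLt⟩ = i then 0 else a ⟨(t : ℕ), Nat.lt_succ_of_lt t.isLt⟩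

private lemma cNew_spec (k m : ℕ) (c : Fin (m + 1) → Fin (k + (m + 1)))
    (i : Fin (k + (m + 1))) (t : Fin m) (h : c ⟨(t : ℕ), Nat.lt_succ_of_lt t.isLt⟩ ≠ i) :
    i.succAbove (cNew k m c i t) = c ⟨(t : ℕ), Nat.lt_succ_of_lt t.isLt⟩ := by
  rw [cNew, dif_neg h]
  exact (Fin.exists_succAbove_eq h).choose_spec

set_option maxHeartbeats 1000000 in
private lemma key_dvd (k : ℕ) : ∀ (m n : ℕ) (hmn : k + m = n), ∀ (d : ℤ) (v : Fin k → Fin n → ℤ),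
    (∀ r : Fin k → Fin n, Function.Injective r →
        d ∣ (Matrix.of fun i j : Fin k => v j (r i)).det) →
    ∀ (a : Fin m → ℤ) (c : Fin m → Fin n),
    d ∣ (Matrix.of fun i j : Fin n => if h : (j : ℕ) < k then v ⟨j, h⟩ i
          else a ⟨(j : ℕ) - k, by have := j.isLt; omega⟩ *
            (if i = c ⟨(j : ℕ) - k, by have := j.isLt; omega⟩ then 1 else 0)).det := by
  intro m
  induction m with
  | zero =>
    intro n hmn d v hminor a c
    subst hmn
    have hmat : (Matrix.of fun i j : Fin (k + 0) => if h : (j : ℕ) < k then v ⟨j, h⟩ i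
          else a ⟨(j : ℕ) - k, by have := j.isLt; omega⟩ *
            (if i = c ⟨(j : ℕ) - k, by have := j.isLt; omega⟩ then 1 else 0))
        = (Matrix.of fun i j : Fin k => v j ((fun t : Fin k => t) i)) := by
      ext i j
      simp only [Matrix.of_apply]
      rw [dif_pos (show ((j : Fin (k+0)) : ℕ) < k from j.isLt)]; rfl
    rw [hmat]
    exact hminor (fun t => t) (fun x y h => h)
  | succ m ih =>
    intro n hmn d v hminor a c
    subst hmn
    rw [Matrix.det_succ_column _ (Fin.last (k + m))]
    apply Finset.dvd_sum
    intro i _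
    apply Dvd.dvd.mul_left
    have base := ih (k + m) rfl d (fun jj ii => v jj (i.succAbove ii))
      (fun r hr => hminor (fun t => i.succAbove (r t))
        (fun x y h => hr (Fin.succAbove_right_injective h)))
      (aNew k m a c i) (cNew k m c i)
    convert base using 2
    · rfl
    ext i' j'
    simp only [Matrix.submatrix_apply, Matrix.of_apply, Fin.succAbove_last, Fin.coe_castSucc]
    by_cases h : (j' : ℕ) < k
    · rw [dif_pos h, dif_pos h]
    · rw [dif_neg h, dif_neg h]
      have ht : ((j' : ℕ) - k) < m := by have := j'.isLt; omega
      have hidx : (⟨(j' : ℕ) - k, by have := j'.isLt; omega⟩ : Fin (m + 1))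
          = ⟨((⟨(j' : ℕ) - k, ht⟩ : Fin m) : ℕ), Nat.lt_succ_of_lt (Fin.isLt _)⟩ := rfl
      by_cases hci : c ⟨(j' : ℕ) - k, by have := j'.isLt; omega⟩ = i
      · have h1 : i.succAbove i' ≠ c ⟨(j' : ℕ) - k, by have := j'.isLt; omega⟩ := by
          rw [hci]; exact Fin.succAbove_ne _ _
        rw [if_neg h1, aNew]
        rw [if_pos (hidx ▸ hci)]
        ring
      · have hspec := cNew_spec k m c i ⟨(j' : ℕ) - k, ht⟩ (fun hh => hci (hidx ▸ hh))
        have h2 : (i.succAbove i' = c ⟨(j' : ℕ) - k, by have := j'.isLt; omega⟩) ↔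
            (i' = cNew k m c i ⟨(j' : ℕ) - k, ht⟩) := by
          rw [← hspec]
          exact ⟨fun h => Fin.succAbove_right_injective h, fun h => by rw [h]⟩
        rw [aNew, if_neg (fun hh => hci (hidx ▸ hh))]
        congr 1
        by_cases h3 : i.succAbove i' = c ⟨(j' : ℕ) - k, by have := j'.isLt; omega⟩
        · rw [if_pos h3, if_pos (h2.mp h3)]
        · rw [if_neg h3, if_neg (fun hh => h3 (h2.mpr hh))]

private def MatE (k m n : ℕ) (hmn : k + m = n) (v : Fin k → Fin n → ℤ) (c : Fin m → Fin n) :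
    Matrix (Fin n) (Fin n) ℤ :=
  Matrix.of fun i j => if h : (j : ℕ) < k then v ⟨j, h⟩ i
    else if i = c ⟨(j : ℕ) - k, by have := j.isLt; omega⟩ then 1 else 0

set_option maxHeartbeats 1000000 in
private lemma key_eq (k : ℕ) : ∀ (m n : ℕ) (hmn : k + m = n) (v : Fin k → Fin n → ℤ)
    (c : Fin m → Fin n), Function.Injective c →
    ∃ (ε : ℤ) (r : Fin k → Fin n), IsUnit ε ∧ Function.Injective r ∧ (∀ i j, r i ≠ c j) ∧
      (MatE k m n hmn v c).det = ε * (Matrix.of fun i j : Fin k => v j (r i)).det := by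
  intro m
  induction m with
  | zero =>
    intro n hmn v c _
    subst hmn
    refine ⟨1, fun t => t, isUnit_one, fun x y h => h, fun i j => j.elim0, ?_⟩
    have hmat : MatE k 0 (k + 0) rfl v c = Matrix.of fun i j : Fin (k + 0) => v j i := by
      ext i j
      show dite _ _ _ = _
      rw [dif_pos (show ((j : Fin (k + 0)) : ℕ) < k from j.isLt)]
      rfl
    rw [hmat, one_mul]
    rfl
  | succ m ih =>
    intro n hmn v c hcinj
    subst hmn
    set t₀ : Fin (m + 1) := ⟨k + m - k, by omega⟩ with ht₀
    have hlast' : ¬ ((Fin.last (k + m) : ℕ) < k) := by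
      have : (Fin.last (k + m) : ℕ) = k + m := rfl
      omega
    have hne : ∀ t : Fin m, c ⟨(t : ℕ), Nat.lt_succ_of_lt t.isLt⟩ ≠ c t₀ := by
      intro t hh
      have h2 := congrArg Fin.val (hcinj hh)
      simp only [ht₀] at h2
      have := t.isLt
      omega
    have hspec : ∀ t : Fin m, (c t₀).succAbove (cNew k m c (c t₀) t)
        = c ⟨(t : ℕ), Nat.lt_succ_of_lt t.isLt⟩ :=
      fun t => cNew_spec k m c (c t₀) t (hne t)
    have hc'inj : Function.Injective (cNew k m c (c t₀)) := by
      intro x y hxy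
      have h1 : c ⟨(x : ℕ), Nat.lt_succ_of_lt x.isLt⟩ = c ⟨(y : ℕ), Nat.lt_succ_of_lt y.isLt⟩ := by
        rw [← hspec x, ← hspec y, hxy]
      have h3 := congrArg Fin.val (hcinj h1)
      exact Fin.ext h3
    obtain ⟨ε', r', hu, hrinj, havoid, hdet⟩ := ih (k + m) rfl
      (fun jj ii => v jj ((c t₀).succAbove ii)) (cNew k m c (c t₀)) hc'inj
    refine ⟨(-1) ^ ((c t₀ : ℕ) + (k + m)) * ε', fun i => (c t₀).succAbove (r' i),
      (isUnit_one.neg.pow _).mul hu,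
      fun x y h => hrinj (Fin.succAbove_right_injective h), ?_, ?_⟩
    · intro i j heq
      by_cases hj : j = t₀
      · subst hj; exact Fin.succAbove_ne _ _ heq
      · have hjv : (j : ℕ) < m := by
          have h1 : (j : ℕ) ≠ k + m - k := fun hh => hj (Fin.ext hh)
          have := j.isLt; omega
        have : r' i = cNew k m c (c t₀) ⟨(j : ℕ), hjv⟩ :=
          Fin.succAbove_right_injective (heq.trans (hspec ⟨(j : ℕ), hjv⟩).symm)
        exact havoid i ⟨(j : ℕ), hjv⟩ this
    · have hentry : ∀ b : Fin (k + (m + 1)),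
          MatE k (m + 1) (k + (m + 1)) rfl v c b (Fin.last (k + m))
            = if b = c t₀ then 1 else 0 := fun b => dif_neg hlast'
      have hsub : (MatE k (m + 1) (k + (m + 1)) rfl v c).submatrix
            (c t₀).succAbove (Fin.last (k + m)).succAbove
          = MatE k m (k + m) rfl (fun jj ii => v jj ((c t₀).succAbove ii))
              (cNew k m c (c t₀)) := by
        ext i' j'
        simp only [Matrix.submatrix_apply, Fin.succAbove_last, MatE, Matrix.of_apply,
          Fin.coe_castSucc]
        by_cases h : (j' : ℕ) < k
        · rw [dif_pos h, dif_pos h]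
        · rw [dif_neg h, dif_neg h]
          have ht : (j' : ℕ) - k < m := by have := j'.isLt; omega
          have h2 : ((c t₀).succAbove i' = c ⟨(j' : ℕ) - k, by have := j'.isLt; omega⟩) ↔
              (i' = cNew k m c (c t₀) ⟨(j' : ℕ) - k, ht⟩) := by
            rw [← hspec ⟨(j' : ℕ) - k, ht⟩]
            exact ⟨fun h => Fin.succAbove_right_injective h, fun h => by rw [h]⟩
          by_cases h3 : (c t₀).succAbove i' = c ⟨(j' : ℕ) - k, by have := j'.isLt; omega⟩
          · rw [if_pos h3, if_pos (h2.mp h3)]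
          · rw [if_neg h3, if_neg (fun hh => h3 (h2.mpr hh))]
      rw [Matrix.det_succ_column _ (Fin.last (k + m))]
      refine Eq.trans (Finset.sum_eq_single (c t₀) (fun b _ hb => ?_)
        (fun h => absurd (Finset.mem_univ _) h)) ?_
      · rw [hentry b, if_neg hb, mul_zero, zero_mul]
      · rw [hentry (c t₀), if_pos rfl, mul_one, hsub, hdet,
          show ((Fin.last (k + m) : Fin (k + (m + 1))) : ℕ) = k + m from rfl, mul_assoc]

private def gAux (n k : ℕ) (hn : 1 ≤ n) (v : Fin k → Fin n → ℤ) (w : Fin n → Fin n → ℤ)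
    (j p : Fin n) : Fin n → ℤ :=
  if h : (j : ℕ) < k then (if p = ⟨0, hn⟩ then v ⟨j, h⟩ else 0)
  else fun i => w j p * (if i = p then 1 else 0)

private lemma gAux_pos (n k : ℕ) (hn : 1 ≤ n) (v : Fin k → Fin n → ℤ) (w : Fin n → Fin n → ℤ)
    (j p : Fin n) (h : (j : ℕ) < k) :
    gAux n k hn v w j p = if p = ⟨0, hn⟩ then v ⟨j, h⟩ else 0 := dif_pos h

private lemma gAux_neg (n k : ℕ) (hn : 1 ≤ n) (v : Fin k → Fin n → ℤ) (w : Fin n → Fin n → ℤ)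
    (j p : Fin n) (h : ¬ (j : ℕ) < k) :
    gAux n k hn v w j p = fun i => w j p * (if i = p then 1 else 0) := dif_neg h


/-- `g` is a greatest common divisor of the set `S ⊆ ℤ`: it divides every element of `S`,
and every common divisor of `S` divides `g`. -/
def IsGcdOfSet (S : Set ℤ) (g : ℤ) : Prop :=
  (∀ x ∈ S, g ∣ x) ∧ ∀ d : ℤ, (∀ x ∈ S, d ∣ x) → d ∣ g

set_option maxHeartbeats 1000000 in
/-- for `v₁, …, v_k ∈ ℤⁿ`, an integer `d` divides every determinant
`det (v₁ | … | v_k | w_{k+1} | … | w_n)` (for all choices of `w`'s in `ℤⁿ`) if and only if it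
divides every `k × k` minor of the `n × k` matrix `(v₁ | … | v_k)`.  Consequently the integral
index `D_IA(v₁,…,v_k)`, the gcd of all such determinants, equals the gcd of all `k × k` minors. -/
theorem stmt0 (n k : ℕ) (hn : 1 ≤ n) (hk : 1 ≤ k) (hkn : k ≤ n) (v : Fin k → Fin n → ℤ) :
    (∀ d : ℤ,
      (∀ w : Fin n → Fin n → ℤ,
          d ∣ (Matrix.of fun i j : Fin n =>
            if h : (j : ℕ) < k then v ⟨j, h⟩ i else w j i).det) ↔
      (∀ r : Fin k → Fin n, Function.Injective r →
          d ∣ (Matrix.of fun i j : Fin k => v j (r i)).det)) ∧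
    (∀ g : ℤ, 0 ≤ g →
      (IsGcdOfSet {x : ℤ | ∃ w : Fin n → Fin n → ℤ,
          x = (Matrix.of fun i j : Fin n =>
            if h : (j : ℕ) < k then v ⟨j, h⟩ i else w j i).det} g ↔
       IsGcdOfSet {x : ℤ | ∃ r : Fin k → Fin n, Function.Injective r ∧
          x = (Matrix.of fun i j : Fin k => v j (r i)).det} g)) := by
  classical
  have main : ∀ d : ℤ,
      (∀ w : Fin n → Fin n → ℤ,
          d ∣ (Matrix.of fun i j : Fin n =>
            if h : (j : ℕ) < k then v ⟨j, h⟩ i else w j i).det) ↔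
      (∀ r : Fin k → Fin n, Function.Injective r →
          d ∣ (Matrix.of fun i j : Fin k => v j (r i)).det) := by
    intro d
    constructor
    · -- full determinants divisible → minors divisible
      intro Hw r hrinj
      set s : Finset (Fin n) := Finset.univ.image r with hs
      have hscard : s.card = k := by
        rw [hs, Finset.card_image_of_injective _ hrinj, Finset.card_univ, Fintype.card_fin]
      have hccard : sᶜ.card = n - k := by
        rw [Finset.card_compl, Fintype.card_fin, hscard]
      set e := sᶜ.equivFin with he
      set c : Fin (n - k) → Fin n := fun t => (e.symm (Fin.cast hccard.symm t) : Fin n) with hc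
      have hcinj : Function.Injective c := by
        intro x y h
        have h1 := e.symm.injective (Subtype.coe_injective h)
        have h2 := congrArg Fin.val h1
        exact Fin.ext h2
      have hcmem : ∀ t, c t ∈ sᶜ := fun t => (e.symm (Fin.cast hccard.symm t)).2
      obtain ⟨ε, r', hu, hr'inj, havoid, hdet⟩ := key_eq k (n - k) n (by omega) v c hcinj
      set w : Fin n → Fin n → ℤ := fun j i =>
        if hj : k ≤ (j : ℕ) then
          (if i = c ⟨(j : ℕ) - k, by have := j.isLt; omega⟩ then 1 else 0) else 0 with hwdef
      have hw : (Matrix.of fun i j : Fin n =>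
          if h : (j : ℕ) < k then v ⟨j, h⟩ i else w j i) = MatE k (n - k) n (by omega) v c := by
        ext i j
        show dite _ _ _ = dite _ _ _
        by_cases h : (j : ℕ) < k
        · rw [dif_pos h, dif_pos h]
        · rw [dif_neg h, dif_neg h]
          show (if hj : k ≤ (j : ℕ) then _ else _) = _
          rw [dif_pos (le_of_not_gt h)]
      have H1 := Hw w
      rw [hw, hdet] at H1
      have H2 : d ∣ (Matrix.of fun i j : Fin k => v j (r' i)).det := by
        rcases Int.isUnit_iff.mp hu with h | h
        · rwa [h, one_mul] at H1
        · rw [h, neg_one_mul] at H1; exact dvd_neg.mp H1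
      have hrange : ∀ i, r' i ∈ s := by
        intro i
        by_contra hmem
        have hcc : r' i ∈ sᶜ := Finset.mem_compl.mpr hmem
        have hct : c (Fin.cast hccard (e ⟨r' i, hcc⟩)) = r' i :=
          congrArg Subtype.val (e.symm_apply_apply ⟨r' i, hcc⟩)
        exact havoid i _ hct.symm
      have hexists : ∀ i, ∃ t, r t = r' i := by
        intro i
        have h1 := hrange i
        rw [hs, Finset.mem_image] at h1
        obtain ⟨t, _, ht⟩ := h1
        exact ⟨t, ht⟩
      choose σ hσ using hexists
      have hσinj : Function.Injective σ := fun x y h => hr'inj (by rw [← hσ x, ← hσ y, h])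
      have hσbij : Function.Bijective σ := Finite.injective_iff_bijective.mp hσinj
      set σe : Equiv.Perm (Fin k) := Equiv.ofBijective σ hσbij with hσe
      have hmm : (Matrix.of fun i j : Fin k => v j (r' i))
          = (Matrix.of fun i j : Fin k => v j (r i)).submatrix σe id := by
        ext i j
        rw [Matrix.submatrix_apply]
        show v j (r' i) = v j (r (σ i))
        rw [hσ i]
      rw [hmm, Matrix.det_permute] at H2
      rcases Int.units_eq_one_or (Equiv.Perm.sign σe) with h | h <;> rw [h] at H2 <;>
        simpa using H2
    · -- minors divisible → full determinants divisible
      intro Hm w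
      have hcols : (fun j => ∑ p, gAux n k hn v w j p) = (Matrix.of fun i j : Fin n =>
          if h : (j : ℕ) < k then v ⟨j, h⟩ i else w j i)ᵀ := by
        funext j
        by_cases h : (j : ℕ) < k
        · rw [Finset.sum_congr rfl (fun p _ => gAux_pos n k hn v w j p h),
            Finset.sum_ite_eq' Finset.univ]
          simp only [Finset.mem_univ, if_true]
          funext i
          show v ⟨j, h⟩ i = dite _ _ _
          rw [dif_pos h]
        · funext i
          rw [Finset.sum_apply]
          have h1 : ∀ p, gAux n k hn v w j p i = w j p * (if i = p then 1 else 0) :=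
            fun p => by rw [gAux_neg n k hn v w j p h]
          rw [Finset.sum_congr rfl (fun p _ => h1 p)]
          show _ = dite _ _ _
          rw [dif_neg h]
          simp [mul_ite, Finset.sum_ite_eq]
      have hM : (Matrix.of fun i j : Fin n =>
          if h : (j : ℕ) < k then v ⟨j, h⟩ i else w j i).det
          = (Matrix.detRowAlternating :
              (Fin n → ℤ) [⋀^Fin n]→ₗ[ℤ] ℤ).toMultilinearMap
              (fun j => ∑ p, gAux n k hn v w j p) := by
        rw [← Matrix.det_transpose, hcols]
        rfl
      rw [hM, MultilinearMap.map_sum]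
      apply Finset.dvd_sum
      intro p _
      have hlt : ∀ t : Fin (n - k), k + (t : ℕ) < n := fun t => by have := t.isLt; omega
      have hlt2 : ∀ j : Fin n, ¬ (j : ℕ) < k → (j : ℕ) - k < n - k :=
        fun j hj => by have := j.isLt; omega
      by_cases hp : ∀ j : Fin n, (j : ℕ) < k → p j = ⟨0, hn⟩
      · have hF2 : (Matrix.detRowAlternating :
              (Fin n → ℤ) [⋀^Fin n]→ₗ[ℤ] ℤ).toMultilinearMap
              (fun j => gAux n k hn v w j (p j))
            = (Matrix.of fun j i => gAux n k hn v w j (p j) i).det := rfl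
        rw [hF2, ← Matrix.det_transpose]
        have hkey := key_dvd k (n - k) n (by omega) d v Hm
          (fun t => w ⟨k + (t : ℕ), hlt t⟩ (p ⟨k + (t : ℕ), hlt t⟩))
          (fun t => p ⟨k + (t : ℕ), hlt t⟩)
        convert hkey using 2
        · rfl
        ext i j
        show gAux n k hn v w j (p j) i = dite _ _ _
        by_cases h : (j : ℕ) < k
        · rw [gAux_pos n k hn v w j (p j) h, if_pos (hp j h), dif_pos h]
        · rw [gAux_neg n k hn v w j (p j) h, dif_neg h]
          have hjt : (⟨k + (((⟨(j : ℕ) - k, hlt2 j h⟩ : Fin (n - k))) : ℕ),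
              hlt ⟨(j : ℕ) - k, hlt2 j h⟩⟩ : Fin n) = j :=
            Fin.ext (show k + ((j : ℕ) - k) = (j : ℕ) by omega)
          rw [hjt]
      · push_neg at hp
        obtain ⟨j, hjk, hj0⟩ := hp
        have hz : gAux n k hn v w j (p j) = 0 := by
          rw [gAux_pos n k hn v w j (p j) hjk, if_neg hj0]
        rw [show (Matrix.detRowAlternating :
              (Fin n → ℤ) [⋀^Fin n]→ₗ[ℤ] ℤ).toMultilinearMap
              (fun j' => gAux n k hn v w j' (p j')) = 0 from
          MultilinearMap.map_coord_zero _ j hz]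
        exact dvd_zero d
  refine ⟨main, ?_⟩
  intro g _
  have e1 : ∀ d : ℤ, (∀ x ∈ {x : ℤ | ∃ w : Fin n → Fin n → ℤ,
      x = (Matrix.of fun i j : Fin n =>
        if h : (j : ℕ) < k then v ⟨j, h⟩ i else w j i).det}, d ∣ x) ↔
      (∀ w : Fin n → Fin n → ℤ, d ∣ (Matrix.of fun i j : Fin n =>
        if h : (j : ℕ) < k then v ⟨j, h⟩ i else w j i).det) :=
    fun d => ⟨fun H w => H _ ⟨w, rfl⟩, fun H x hx => by obtain ⟨w, rfl⟩ := hx; exact H w⟩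
  have e2 : ∀ d : ℤ, (∀ x ∈ {x : ℤ | ∃ r : Fin k → Fin n, Function.Injective r ∧
      x = (Matrix.of fun i j : Fin k => v j (r i)).det}, d ∣ x) ↔
      (∀ r : Fin k → Fin n, Function.Injective r →
        d ∣ (Matrix.of fun i j : Fin k => v j (r i)).det) :=
    fun d => ⟨fun H r hr => H _ ⟨r, hr, rfl⟩, fun H x hx => by
      obtain ⟨r, hr, rfl⟩ := hx; exact H r hr⟩
  constructor
  · intro h
    obtain ⟨hA, hB⟩ := h
    exact ⟨(e2 g).mpr ((main g).mp ((e1 g).mp hA)),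
      fun d hd => hB d ((e1 d).mpr ((main d).mpr ((e2 d).mp hd)))⟩
  · intro h
    obtain ⟨hA, hB⟩ := h
    exact ⟨(e1 g).mpr ((main g).mpr ((e2 g).mp hA)),
      fun d hd => hB d ((e2 d).mpr ((main d).mp ((e1 d).mp hd)))⟩
end

section
/- Let v₁,…,v_k ∈ ℤⁿ be linearly independent over ℚ, with k ≤ n. Let S denote the subgroup of ℤⁿ generated by v₁,…,v_k (the ℤ-span), and let L denote the subgroup {x ∈ ℤⁿ : x lies in the ℚ-span of v₁,…,v_k} (equivalently, the ℝ-span intersected with ℤⁿ). Then S has finite index in L, and this index [L : S] equals the greatest common divisor of all k×k minors of the n×k matrix (v₁ | … | v_k). -/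
/-- The coordinatewise cast `(ℤⁿ →+ ℚⁿ)`. -/
def intCastPi (n : ℕ) : (Fin n → ℤ) →+ (Fin n → ℚ) where
  toFun x := fun j => (x j : ℚ)
  map_zero' := by funext j; simp
  map_add' x y := by funext j; simp


lemma exists_minor_ne_zero {F : Type*} [Field F] {n k : ℕ} (B : Matrix (Fin n) (Fin k) F)
    (hB : LinearIndependent F (fun j : Fin k => fun i : Fin n => B i j)) :
    ∃ r : Fin k ↪ Fin n, (B.submatrix r id).det ≠ 0 := by
  classical
  have hspan : Submodule.span F (Set.range fun p : Fin n => B p) = ⊤ := by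
    by_contra h
    obtain ⟨φ, hφ0, hφ⟩ := Submodule.exists_dual_map_eq_bot_of_lt_top
      (lt_top_iff_ne_top.2 h) inferInstance
    have hrow : ∀ p, φ (B p) = 0 := by
      intro p
      have : φ (B p) ∈ Submodule.map φ (Submodule.span F (Set.range fun p : Fin n => B p)) :=
        Submodule.mem_map_of_mem (Submodule.subset_span ⟨p, rfl⟩)
      rw [hφ] at this
      exact (Submodule.mem_bot F).mp this
    have hc : ∀ i, φ (Pi.single i 1) = 0 := by
      apply Fintype.linearIndependent_iff.mp hB (fun i => φ (Pi.single i 1))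
      funext p
      have := hrow p
      rw [LinearMap.pi_apply_eq_sum_univ φ (B p)] at this
      rw [Finset.sum_apply]
      have hps : ∀ i : Fin k, (Pi.single i (1:F) : Fin k → F) = fun j => if i = j then 1 else 0 := by
        intro i; funext j; simp [Pi.single_apply, eq_comm]
      simp only [hps]
      simpa [mul_comm, smul_eq_mul] using this
    have : φ = 0 := by
      ext x
      simpa [Pi.single_apply] using hc x
    exact hφ0 this
  obtain ⟨t, hts, htsp, htli⟩ := exists_linearIndependent F (Set.range fun p : Fin n => B p)
  rw [hspan] at htsp
  let b : Module.Basis t F (Fin k → F) := Module.Basis.mk htli (by rw [Subtype.range_coe_subtype,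
    Set.setOf_mem_eq, htsp])
  haveI : Fintype t := FiniteDimensional.fintypeBasisIndex b
  have hcard : Fintype.card t = k := by
    have := Module.finrank_eq_card_basis b
    simpa [Module.finrank_fin_fun] using this.symm
  let e : Fin k ≃ t := (Fintype.equivFinOfCardEq hcard).symm
  have hsel : ∀ y : t, ∃ p : Fin n, B p = y := fun y => hts y.2
  choose s hs using hsel
  have hsinj : Function.Injective s := by
    intro y1 y2 h
    have := (hs y1).symm.trans (h ▸ hs y2)
    exact Subtype.ext (by simpa using this)
  refine ⟨⟨fun i => s (e i), hsinj.comp e.injective⟩, ?_⟩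
  have hrows : LinearIndependent F (fun i : Fin k => (B.submatrix (fun i => s (e i)) id) i) := by
    have heq : (fun i : Fin k => (B.submatrix (fun i => s (e i)) id) i)
        = fun i : Fin k => ((e i : Fin k → F)) := by
      funext i
      have := hs (e i)
      funext j
      simpa [Matrix.submatrix_apply] using congrFun this j
    rw [heq]
    exact htli.comp e e.injective
  have hunit : IsUnit (B.submatrix (fun i => s (e i)) id) :=
    Matrix.linearIndependent_rows_iff_isUnit.mp hrows
  have := (Matrix.isUnit_iff_isUnit_det _).mp hunit
  exact this.ne_zero

/-- linear version -/
def intCastPiL (n : ℕ) : (Fin n → ℤ) →ₗ[ℤ] (Fin n → ℚ) where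
  toFun x := fun j => (x j : ℚ)
  map_add' x y := by funext j; simp
  map_smul' c x := by funext j; simp

/-- for `v₁,…,v_k ∈ ℤⁿ` linearly independent over `ℚ` (with `k ≤ n`), the
subgroup `S = span_ℤ{v₁,…,v_k}` has finite index inside the subgroup
`L = {x ∈ ℤⁿ : x ∈ span_ℚ{v₁,…,v_k}}`, and this index `[L : S]` equals the greatest common
divisor of all `k × k` minors of the `n × k` matrix `(v₁ | … | v_k)`. -/
theorem stmt3 (n k : ℕ) (hk : 1 ≤ k) (hkn : k ≤ n) (v : Fin k → Fin n → ℤ)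
    (hli : LinearIndependent ℚ fun i => (intCastPi n) (v i)) :
    (AddSubgroup.closure (Set.range v)).relIndex
        (AddSubgroup.comap (intCastPi n)
          (Submodule.span ℚ (Set.range fun i => (intCastPi n) (v i))).toAddSubgroup) ≠ 0 ∧
    ((AddSubgroup.closure (Set.range v)).relIndex
        (AddSubgroup.comap (intCastPi n)
          (Submodule.span ℚ (Set.range fun i => (intCastPi n) (v i))).toAddSubgroup) : ℤ)
      = Finset.univ.gcd (fun r : Fin k ↪ Fin n =>
          ((Matrix.of fun (i : Fin n) (j : Fin k) => v j i).submatrix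
            (r : Fin k → Fin n) id).det) := by
  classical
  set φ := intCastPiL n with hφ
  have φeq : ∀ x, (intCastPi n) x = φ x := fun _ => rfl
  set S : Submodule ℤ (Fin n → ℤ) := Submodule.span ℤ (Set.range v) with hSdef
  set W : Submodule ℚ (Fin n → ℚ) :=
    Submodule.span ℚ (Set.range fun i => (intCastPi n) (v i)) with hWdef
  set L : Submodule ℤ (Fin n → ℤ) := (W.restrictScalars ℤ).comap φ with hLdef
  -- ℤ-linear independence of v
  have hliZ : LinearIndependent ℤ v := by
    have h1 : LinearIndependent ℤ fun i => φ (v i) := by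
      refine LinearIndependent.restrict_scalars ?_ hli
      intro a b hab
      simpa using hab
    exact h1.of_comp φ
  -- Smith normal form
  obtain ⟨m, snf⟩ := S.smithNormalForm (Pi.basisFun ℤ (Fin n))
  obtain ⟨u, bN, f, a, hsnf⟩ := snf
  have hmk : m = k := by
    have h1 : Module.finrank ℤ ↥S = m := by
      simpa using (Module.finrank_eq_card_basis bN)
    have h2 : Module.finrank ℤ ↥S = k := by
      simpa using (Module.finrank_eq_card_basis (Module.Basis.span hliZ))
    rw [h1] at h2; exact h2
  subst hmk
  -- a i ≠ 0
  have hane : ∀ i, a i ≠ 0 := by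
    intro i hai
    apply Module.Basis.ne_zero bN i
    have := hsnf i
    rw [hai, zero_smul] at this
    exact Subtype.ext this
  -- ℚ-basis of ℚⁿ given by the cast of u
  have keyφ : ∀ y : Fin n → ℤ, φ y ∈ Submodule.span ℚ (Set.range fun q => φ (u q)) := by
    intro y
    have hy : y ∈ Submodule.span ℤ (Set.range u) := by rw [u.span_eq]; trivial
    have hle : Submodule.span ℤ (Set.range u) ≤
        ((Submodule.span ℚ (Set.range fun q => φ (u q))).restrictScalars ℤ).comap φ := by
      rw [Submodule.span_le]
      rintro _ ⟨q, rfl⟩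
      exact Submodule.subset_span ⟨q, rfl⟩
    exact hle hy
  have hspanc : ⊤ ≤ Submodule.span ℚ (Set.range fun q => φ (u q)) := by
    intro x _
    have hx : x = ∑ j, x j • φ (Pi.single j 1) := by
      funext p
      simp only [Finset.sum_apply, Pi.smul_apply, hφ, intCastPiL, LinearMap.coe_mk, AddHom.coe_mk,
        Pi.single_apply, smul_eq_mul]
      push_cast
      simp [Pi.single_apply]
    rw [hx]
    exact Submodule.sum_mem _ fun j _ => Submodule.smul_mem _ _ (keyφ _)
  let b : Module.Basis (Fin n) ℚ (Fin n → ℚ) :=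
    basisOfTopLeSpanOfCardEqFinrank (fun q => φ (u q)) hspanc
      (by simp [Module.finrank_fin_fun])
  have hb : ∀ q, b q = φ (u q) := fun q =>
    congrFun (coe_basisOfTopLeSpanOfCardEqFinrank _ _ _) q
  -- S is generated by the SNF generators
  have hSgen : S = Submodule.span ℤ (Set.range fun i => a i • u (f i)) := by
    have hco : ⇑S.subtype ∘ ⇑bN = fun i => a i • u (f i) := funext fun i => hsnf i
    rw [← Submodule.map_subtype_top S, ← bN.span_eq, Submodule.map_span, ← Set.range_comp, hco]
  -- S ≤ L
  have hSL : S ≤ L := by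
    rw [hSdef, Submodule.span_le]
    rintro _ ⟨i, rfl⟩
    exact Submodule.subset_span ⟨i, rfl⟩
  -- W is generated by b ∘ f
  have hWgen : W = Submodule.span ℚ (Set.range fun i => b (f i)) := by
    apply le_antisymm
    · rw [hWdef, Submodule.span_le]
      rintro _ ⟨i, rfl⟩
      have hvi : v i ∈ S := Submodule.subset_span ⟨i, rfl⟩
      rw [hSgen] at hvi
      have hle : Submodule.span ℤ (Set.range fun i => a i • u (f i)) ≤
          ((Submodule.span ℚ (Set.range fun i => b (f i))).restrictScalars ℤ).comap φ := by
        rw [Submodule.span_le]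
        rintro _ ⟨i, rfl⟩
        simp only [SetLike.mem_coe, Submodule.mem_comap, Submodule.restrictScalars_mem]
        have heq : φ (a i • u (f i)) = (a i : ℚ) • b (f i) := by
          rw [map_smul, hb, Int.cast_smul_eq_zsmul]
        rw [heq]
        exact Submodule.smul_mem _ _ (Submodule.subset_span ⟨i, rfl⟩)
      have := hle hvi
      simpa [φeq] using this
    · rw [Submodule.span_le]
      rintro _ ⟨i, rfl⟩
      have h1 : a i • u (f i) ∈ S := by rw [hSgen]; exact Submodule.subset_span ⟨i, rfl⟩
      have h2 : φ (a i • u (f i)) ∈ W := hSL h1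
      have h3 : b (f i) = ((a i : ℚ))⁻¹ • φ (a i • u (f i)) := by
        rw [map_smul, ← Int.cast_smul_eq_zsmul ℚ, smul_smul,
          inv_mul_cancel₀ (by exact_mod_cast hane i), one_smul, hb]
      show b (f i) ∈ W
      rw [h3]
      exact Submodule.smul_mem _ _ h2
  -- representation compatibility
  have hrepr : ∀ (x : Fin n → ℤ) (j : Fin n), b.repr (φ x) j = ((u.repr x j : ℤ) : ℚ) := by
    intro x j
    have hx : φ x = ∑ q, ((u.repr x q : ℤ) : ℚ) • b q := by
      conv_lhs => rw [← u.sum_repr x]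
      rw [map_sum]
      exact Finset.sum_congr rfl fun q _ => by
        rw [map_smul, hb, Int.cast_smul_eq_zsmul]
    rw [hx, Module.Basis.repr_sum_self]
  -- L = span of u ∘ f
  have hLspan : L = Submodule.span ℤ (Set.range fun i => u (f i)) := by
    ext x
    have hbim : (Set.range fun i => b (f i)) = ⇑b '' Set.range ⇑f := by
      rw [← Set.range_comp]; rfl
    have huim : (Set.range fun i => u (f i)) = ⇑u '' Set.range ⇑f := by
      rw [← Set.range_comp]; rfl
    constructor
    · intro hx
      have hmem : φ x ∈ W := hx
      rw [hWgen, hbim, Module.Basis.mem_span_image] at hmem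
      rw [huim, Module.Basis.mem_span_image]
      intro j hj
      apply hmem
      simp only [Finset.mem_coe, Finsupp.mem_support_iff] at hj ⊢
      rw [hrepr]
      exact_mod_cast hj
    · intro hx
      rw [huim, Module.Basis.mem_span_image] at hx
      show φ x ∈ W
      rw [hWgen, hbim, Module.Basis.mem_span_image]
      intro j hj
      apply hx
      simp only [Finset.mem_coe, Finsupp.mem_support_iff] at hj ⊢
      intro h0
      rw [hrepr, h0] at hj
      exact hj (by simp)
  -- basis of L given by u ∘ f
  have hufli : LinearIndependent ℤ (fun i => u (f i)) := u.linearIndependent.comp f f.injective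
  let wB : Module.Basis (Fin m) ℤ ↥L := (Module.Basis.span hufli).map (LinearEquiv.ofEq _ _ hLspan.symm)
  have hwB : ∀ i, (wB i : Fin n → ℤ) = u (f i) := by
    intro i
    rw [show wB i = LinearEquiv.ofEq _ _ hLspan.symm (Module.Basis.span hufli i) from
      Module.Basis.map_apply _ _ _]
    rw [LinearEquiv.coe_ofEq_apply]
    exact congrArg Subtype.val (Module.Basis.span_apply hufli i)
  set SL : Submodule ℤ ↥L := S.comap L.subtype with hSLdef
  set P : Submodule ℤ (Fin m → ℤ) :=
    Submodule.pi Set.univ (fun i => Ideal.span {a i}) with hPdef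
  have hcoe_sum : ∀ x : ↥L, (x : Fin n → ℤ) = ∑ i, wB.equivFun x i • u (f i) := by
    intro x
    conv_lhs => rw [← wB.sum_equivFun x]
    rw [show ((∑ i, wB.equivFun x i • wB i : ↥L) : Fin n → ℤ)
        = ∑ i, wB.equivFun x i • (wB i : Fin n → ℤ) by rw [Submodule.coe_sum]; rfl]
    exact Finset.sum_congr rfl fun i _ => by rw [hwB]
  have hmap : SL.map (wB.equivFun : ↥L →ₗ[ℤ] (Fin m → ℤ)) = P := by
    apply le_antisymm
    · rintro _ ⟨x, hx, rfl⟩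
      simp only [LinearEquiv.coe_coe]
      have hxS : (x : Fin n → ℤ) ∈ Submodule.span ℤ (Set.range fun i => a i • u (f i)) := by
        rw [← hSgen]; exact hx
      rw [Submodule.mem_span_range_iff_exists_fun] at hxS
      obtain ⟨c, hc⟩ := hxS
      have h2 : ∑ i, (c i * a i) • u (f i) = ∑ i, wB.equivFun x i • u (f i) := by
        rw [← hcoe_sum x, ← hc]
        exact Finset.sum_congr rfl fun i _ => by rw [smul_smul]
      have h3 : ∀ i, c i * a i = wB.equivFun x i := by
        have hz := Fintype.linearIndependent_iff.mp hufli
          (fun i => c i * a i - wB.equivFun x i) ?_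
        · intro i; exact sub_eq_zero.mp (hz i)
        · simp only [sub_smul]
          rw [Finset.sum_sub_distrib, h2, sub_self]
      rw [hPdef, Submodule.mem_pi]
      intro i _
      rw [Ideal.mem_span_singleton]
      exact ⟨c i, by rw [← h3 i, mul_comm]⟩
    · intro c hc
      rw [hPdef, Submodule.mem_pi] at hc
      have hdvd : ∀ i, a i ∣ c i := by
        intro i
        exact Ideal.mem_span_singleton.mp (hc i (Set.mem_univ i))
      choose d hd using hdvd
      refine ⟨∑ i, c i • wB i, ?_, ?_⟩
      · show ((∑ i, c i • wB i : ↥L) : Fin n → ℤ) ∈ S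
        rw [show ((∑ i, c i • wB i : ↥L) : Fin n → ℤ)
            = ∑ i, c i • (wB i : Fin n → ℤ) by simp]
        rw [hSgen]
        have heq2 : ∑ i, c i • (wB i : Fin n → ℤ) = ∑ i, d i • (a i • u (f i)) := by
          refine Finset.sum_congr rfl fun i _ => ?_
          rw [hwB, smul_smul, mul_comm (d i) (a i), ← hd i]
        rw [heq2]
        exact Submodule.sum_mem _ fun i _ =>
          Submodule.smul_mem _ _ (Submodule.subset_span ⟨i, rfl⟩)
      · simp only [LinearEquiv.coe_coe]
        rw [Module.Basis.equivFun_apply]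
        exact wB.repr_sum_self c
  have hcard : Nat.card (↥L ⧸ SL) = ∏ i, (a i).natAbs := by
    have e1 : (↥L ⧸ SL) ≃ₗ[ℤ] ((Fin m → ℤ) ⧸ P) :=
      Submodule.Quotient.equiv SL P wB.equivFun hmap
    have e2 := Submodule.quotientPi (fun i : Fin m => (Ideal.span {a i} : Submodule ℤ ℤ))
    rw [Nat.card_congr e1.toEquiv, hPdef, Nat.card_congr e2.toEquiv, Nat.card_pi]
    exact Finset.prod_congr rfl fun i _ => by
      rw [Nat.card_congr (Int.quotientSpanEquivZMod (a i)).toEquiv, Nat.card_zmod]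
  have hclos : AddSubgroup.closure (Set.range v) = S.toAddSubgroup :=
    (Submodule.span_int_eq_addSubgroupClosure _).symm
  have hcomap : (AddSubgroup.comap (intCastPi n) W.toAddSubgroup) = L.toAddSubgroup := rfl
  have hrel : (S.toAddSubgroup).relIndex (L.toAddSubgroup) = Nat.card (↥L ⧸ SL) := rfl
  -- matrices
  set A : Matrix (Fin n) (Fin m) ℤ := Matrix.of fun i j => v j i with hAdef
  set U : Matrix (Fin n) (Fin n) ℤ := Matrix.of fun p q => u q p with hUdef
  set G : Matrix (Fin n) (Fin m) ℤ := Matrix.of fun p i => a i * u (f i) p with hGdef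
  let vS : Module.Basis (Fin m) ℤ ↥S := Module.Basis.span hliZ
  set C : Matrix (Fin m) (Fin m) ℤ := bN.toMatrix (fun j => vS j) with hCdef
  have hAGC : A = G * C := by
    ext p j
    have h1 : v j = ((vS j : ↥S) : Fin n → ℤ) := (congrArg Subtype.val (Module.Basis.span_apply hliZ j)).symm
    have h2 : ((vS j : ↥S) : Fin n → ℤ) = ∑ i, C i j • (a i • u (f i)) := by
      conv_lhs => rw [← bN.sum_repr (vS j)]
      rw [show (((∑ i, bN.repr (vS j) i • bN i : ↥S)) : Fin n → ℤ)
          = ∑ i, bN.repr (vS j) i • ((bN i : ↥S) : Fin n → ℤ) by rw [Submodule.coe_sum]; rfl]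
      exact Finset.sum_congr rfl fun i _ => by rw [hsnf i]; rfl
    have : A p j = ∑ i, C i j * (a i * u (f i) p) := by
      rw [hAdef, Matrix.of_apply, h1, h2]
      simp [Finset.sum_apply]
    rw [this, Matrix.mul_apply]
    exact Finset.sum_congr rfl fun i _ => by rw [hGdef]; simp [Matrix.of_apply]; ring
  have hCunit : IsUnit C.det := by
    have : Invertible C := bN.invertibleToMatrix vS
    exact Matrix.isUnit_det_of_invertible C
  have hminor : ∀ r : Fin m ↪ Fin n,
      (A.submatrix (r : Fin m → Fin n) id).det
        = (U.submatrix (r : Fin m → Fin n) (f : Fin m → Fin n)).det * ((∏ i, a i) * C.det) := by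
    intro r
    have h1 : A.submatrix (r : Fin m → Fin n) id = G.submatrix (r : Fin m → Fin n) id * C := by
      ext i' j
      rw [hAGC]
      simp [Matrix.mul_apply, Matrix.submatrix_apply]
    have h2 : G.submatrix (r : Fin m → Fin n) id
        = U.submatrix (r : Fin m → Fin n) (f : Fin m → Fin n) * Matrix.diagonal a := by
      ext i' i
      rw [Matrix.mul_diagonal]
      simp only [hGdef, hUdef, Matrix.submatrix_apply, Matrix.of_apply, id_eq]
      ring
    rw [h1, Matrix.det_mul, h2, Matrix.det_mul, Matrix.det_diagonal]
    ring
  -- the gcd of minors of U restricted to the columns f is 1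
  have hgcd1 : Finset.univ.gcd
      (fun r : Fin m ↪ Fin n => (U.submatrix (r : Fin m → Fin n) (f : Fin m → Fin n)).det) = 1 := by
    set gU : ℤ := Finset.univ.gcd
      (fun r : Fin m ↪ Fin n => (U.submatrix (r : Fin m → Fin n) (f : Fin m → Fin n)).det)
      with hgU
    have hBcols : LinearIndependent ℚ (fun j : Fin m => fun p : Fin n =>
        ((Matrix.of fun p (j : Fin m) => ((u (f j) p : ℤ) : ℚ)) p j)) := by
      have heq : (fun j : Fin m => fun p : Fin n =>
          ((Matrix.of fun p (j : Fin m) => ((u (f j) p : ℤ) : ℚ)) p j))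
          = fun j => b (f j) := by
        funext j p
        rw [hb]
        rfl
      rw [heq]
      exact b.linearIndependent.comp f f.injective
    obtain ⟨r₀, hr₀⟩ := exists_minor_ne_zero _ hBcols
    have hsub0 : (Matrix.of fun p (j : Fin m) => ((u (f j) p : ℤ) : ℚ)).submatrix
        (r₀ : Fin m → Fin n) id
        = (Int.castRingHom ℚ).mapMatrix (U.submatrix (r₀ : Fin m → Fin n) (f : Fin m → Fin n))
        := by
      ext i j; rfl
    have h0 : (U.submatrix (r₀ : Fin m → Fin n) (f : Fin m → Fin n)).det ≠ 0 := by
      intro h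
      apply hr₀
      rw [hsub0, ← RingHom.map_det, h]
      simp
    have hgU0 : gU ≠ 0 := by
      intro h
      exact h0 (Finset.gcd_eq_zero_iff.mp (hgU ▸ h) r₀ (Finset.mem_univ r₀))
    have hg1 : gU.natAbs = 1 := by
      by_contra hne
      obtain ⟨q, hq, hqg⟩ : ∃ q : ℕ, q.Prime ∧ (q:ℤ) ∣ gU :=
        ⟨gU.natAbs.minFac, Nat.minFac_prime hne,
          (Int.natCast_dvd_natCast.mpr (Nat.minFac_dvd _)).trans (Int.natAbs_dvd.mpr dvd_rfl)⟩
      haveI := Fact.mk hq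
      have hqdet : ∀ r : Fin m ↪ Fin n,
          (q:ℤ) ∣ (U.submatrix (r : Fin m → Fin n) (f : Fin m → Fin n)).det := fun r =>
        hqg.trans (hgU ▸ Finset.gcd_dvd (Finset.mem_univ r))
      have hnotli : ¬ LinearIndependent (ZMod q) (fun j : Fin m => fun p : Fin n =>
          ((Matrix.of fun p (j : Fin m) => ((u (f j) p : ℤ) : ZMod q)) p j)) := by
        intro hl
        obtain ⟨r, hr⟩ := exists_minor_ne_zero _ hl
        apply hr
        have hsub : (Matrix.of fun p (j : Fin m) => ((u (f j) p : ℤ) : ZMod q)).submatrix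
            (r : Fin m → Fin n) id
            = (Int.castRingHom (ZMod q)).mapMatrix
              (U.submatrix (r : Fin m → Fin n) (f : Fin m → Fin n)) := by
          ext i j; rfl
        rw [hsub, ← RingHom.map_det]
        exact (ZMod.intCast_zmod_eq_zero_iff_dvd _ q).mpr (hqdet r)
      obtain ⟨c, hc, i₀, hi₀⟩ := Fintype.not_linearIndependent_iff.mp hnotli
      set ct : Fin m → ℤ := fun j => ((c j).val : ℤ) with hct
      have hcast : ∀ j, ((ct j : ℤ) : ZMod q) = c j := by
        intro j
        rw [hct]
        push_cast
        exact ZMod.natCast_rightInverse (c j)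
      set y : Fin n → ℤ := ∑ j, ct j • u (f j) with hy
      have hdvdy : ∀ p, (q:ℤ) ∣ y p := by
        intro p
        rw [← ZMod.intCast_zmod_eq_zero_iff_dvd]
        have hyp : y p = ∑ j, ct j * u (f j) p := by
          rw [hy]; simp [Finset.sum_apply]
        rw [hyp]
        push_cast
        have hcp := congrFun hc p
        simp only [Finset.sum_apply, Pi.smul_apply, smul_eq_mul, Matrix.of_apply,
          Pi.zero_apply] at hcp
        calc ∑ j, ((ct j : ℤ) : ZMod q) * ((u (f j) p : ℤ) : ZMod q)
            = ∑ j, c j * ((u (f j) p : ℤ) : ZMod q) :=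
              Finset.sum_congr rfl fun j _ => by rw [hcast j]
          _ = 0 := hcp
      set x : Fin n → ℤ := fun p => y p / q with hx
      have hqx : ∀ p, (q:ℤ) * x p = y p := fun p => Int.mul_ediv_cancel' (hdvdy p)
      have hyspan : y ∈ Submodule.span ℤ (Set.range fun i => u (f i)) := by
        rw [hy]
        exact Submodule.sum_mem _ fun j _ =>
          Submodule.smul_mem _ _ (Submodule.subset_span ⟨j, rfl⟩)
      have hyL : y ∈ L := by rw [hLspan]; exact hyspan
      have hxL : x ∈ L := by
        show φ x ∈ W
        have hφx : φ x = ((q:ℚ))⁻¹ • φ y := by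
          funext p
          simp only [hφ, intCastPiL, LinearMap.coe_mk, AddHom.coe_mk, Pi.smul_apply,
            smul_eq_mul]
          have hq0 : (q:ℚ) ≠ 0 := by exact_mod_cast hq.ne_zero
          field_simp
          rw [mul_comm]
          exact_mod_cast (hqx p)
        rw [hφx]
        exact Submodule.smul_mem _ _ hyL
      have hxspan : x ∈ Submodule.span ℤ (Set.range fun i => u (f i)) := by
        rw [← hLspan]; exact hxL
      rw [Submodule.mem_span_range_iff_exists_fun] at hxspan
      obtain ⟨d, hd⟩ := hxspan
      have hysum : ∑ j, ((q:ℤ) * d j) • u (f j) = ∑ j, ct j • u (f j) := by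
        have h1 : ∑ j, ((q:ℤ) * d j) • u (f j) = (q:ℤ) • ∑ j, d j • u (f j) := by
          rw [Finset.smul_sum]
          exact Finset.sum_congr rfl fun j _ => by rw [smul_smul]
        rw [h1, hd]
        funext p
        simp only [Pi.smul_apply, smul_eq_mul, Finset.sum_apply]
        rw [hqx p, hy]
        simp [Finset.sum_apply]
      have hcoef : ∀ j, (q:ℤ) * d j = ct j := by
        have hz := Fintype.linearIndependent_iff.mp hufli
          (fun j => (q:ℤ) * d j - ct j) ?_
        · intro j; exact sub_eq_zero.mp (hz j)
        · simp only [sub_smul]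
          rw [Finset.sum_sub_distrib, hysum, sub_self]
      apply hi₀
      have : c i₀ = (((q:ℤ) * d i₀ : ℤ) : ZMod q) := by
        rw [hcoef i₀, hcast i₀]
      rw [this]
      push_cast
      simp
    have : gU = (gU.natAbs : ℤ) := by
      rw [← Int.abs_eq_natAbs, Int.abs_eq_normalize, Finset.normalize_gcd]
    rw [this, hg1]
    norm_num
  -- final assembly
  rw [hclos, hcomap, hrel, hcard]
  have hg : Finset.univ.gcd
      (fun r : Fin m ↪ Fin n => (A.submatrix (r : Fin m → Fin n) id).det)
      = ((∏ i, (a i).natAbs : ℕ) : ℤ) := by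
    rw [Finset.gcd_congr rfl (fun r _ => hminor r), Finset.gcd_mul_right, hgcd1, one_mul,
      ← Int.abs_eq_normalize, abs_mul]
    have habs : |C.det| = 1 := by
      rcases Int.isUnit_iff.mp hCunit with h | h <;> simp [h]
    rw [habs, mul_one, Finset.abs_prod, Nat.cast_prod]
    exact Finset.prod_congr rfl fun i _ => Int.abs_eq_natAbs (a i)
  constructor
  · exact Finset.prod_ne_zero_iff.mpr fun i _ => Int.natAbs_ne_zero.mpr (hane i)
  · exact hg.symm
end

section
/- Let n ≥ 1, let v ∈ ℤⁿ be primitive (the gcd of its coordinates is 1), let λ ∈ ℝ, and let P = {y ∈ ℝⁿ : ⟨y, v⟩ + λ = 0} be the corresponding rational affine hyperplane. Suppose Φ is an n×n integer matrix with det Φ = ±1 and c ∈ ℝⁿ are such that the affine map φ(y) = Φy + c maps P onto the coordinate hyperplane {x ∈ ℝⁿ : xₙ = 0}. Then for every x ∈ ℝⁿ, the absolute value of the n-th coordinate of Φx + c equals |⟨x, v⟩ + λ|. -/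
/-- let `v ∈ ℤⁿ` be primitive (gcd of its coordinates is `1`), `λ ∈ ℝ`, and
`P = {y ∈ ℝⁿ : ⟨y, v⟩ + λ = 0}`.  If the integral affine map `φ(y) = Φy + c`, with
`Φ ∈ GL(n;ℤ)` (integer matrix of determinant `±1`) and `c ∈ ℝⁿ`, maps `P` onto the
coordinate hyperplane `{xₙ = 0}`, then for every `x ∈ ℝⁿ` the absolute value of the `n`-th
coordinate of `φ(x)` equals `|⟨x, v⟩ + λ|`. -/
theorem stmt13 (n : ℕ) (hn : 0 < n) (v : Fin n → ℤ) (hv : Finset.univ.gcd v = 1)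
    (lam : ℝ) (Φ : Matrix (Fin n) (Fin n) ℤ) (hΦ : Φ.det = 1 ∨ Φ.det = -1) (c : Fin n → ℝ)
    (hmap : (fun y : Fin n → ℝ => (Φ.map (fun m : ℤ => (m : ℝ))).mulVec y + c) ''
        {y : Fin n → ℝ | (∑ j, y j * (v j : ℝ)) + lam = 0}
      = {x : Fin n → ℝ | x ⟨n - 1, Nat.sub_lt hn Nat.one_pos⟩ = 0}) :
    ∀ x : Fin n → ℝ,
      |((Φ.map (fun m : ℤ => (m : ℝ))).mulVec x + c) ⟨n - 1, Nat.sub_lt hn Nat.one_pos⟩|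
        = |(∑ j, x j * (v j : ℝ)) + lam| := by
  set i : Fin n := ⟨n - 1, Nat.sub_lt hn Nat.one_pos⟩ with hi
  set A : Matrix (Fin n) (Fin n) ℝ := Φ.map (fun m : ℤ => (m : ℝ)) with hA
  have hdet : IsUnit Φ.det := by
    rcases hΦ with h | h <;> simp [h, Int.isUnit_iff]
  set B : Matrix (Fin n) (Fin n) ℤ := Φ⁻¹ with hB
  have hΦB : Φ * B = 1 := Matrix.mul_nonsing_inv Φ hdet
  have hBΦ : B * Φ = 1 := Matrix.nonsing_inv_mul Φ hdet
  have hmapmulBA : (B.map (fun m : ℤ => (m : ℝ))) * A = 1 := by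
    have h1 : ((B * Φ).map (fun m : ℤ => (m : ℝ)))
        = (B.map (fun m : ℤ => (m : ℝ))) * A := by
      ext a b
      simp [hA, Matrix.map_apply, Matrix.mul_apply]
    rw [← h1, hBΦ]
    ext a b
    simp [Matrix.map_apply, Matrix.one_apply, apply_ite (fun m : ℤ => (m : ℝ))]
  have hinj : ∀ d : Fin n → ℝ, A.mulVec d = 0 → d = 0 := by
    intro d hd
    have h2 : (B.map (fun m : ℤ => (m : ℝ))).mulVec (A.mulVec d) = d := by
      rw [Matrix.mulVec_mulVec, hmapmulBA, Matrix.one_mulVec]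
    rw [hd, Matrix.mulVec_zero] at h2
    exact h2.symm
  have h0 : ∀ y : Fin n → ℝ, (∑ j, y j * (v j : ℝ)) + lam = 0 ↔
      (A.mulVec y + c) i = 0 := by
    intro y
    constructor
    · intro hy
      have h3 : A.mulVec y + c ∈ {x : Fin n → ℝ | x i = 0} := by
        rw [← hmap]
        exact Set.mem_image_of_mem _ hy
      exact h3
    · intro hy
      have h3 : A.mulVec y + c ∈
          (fun z : Fin n → ℝ => A.mulVec z + c) ''
            {z : Fin n → ℝ | (∑ j, z j * (v j : ℝ)) + lam = 0} := by
        rw [hmap]; exact hy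
      obtain ⟨y', hy', heq⟩ := h3
      have hyy : A.mulVec y' = A.mulVec y := by
        simpa using congrArg (fun z => z - c) heq
      have h4 : y' = y := by
        have hsub : A.mulVec (y' - y) = 0 := by
          rw [Matrix.mulVec_sub, hyy, sub_self]
        exact sub_eq_zero.mp (hinj _ hsub)
      rw [← h4]; exact hy'
  have hk : ∃ k, v k ≠ 0 := by
    by_contra h
    push_neg at h
    have : Finset.univ.gcd v = 0 :=
      Finset.gcd_eq_zero_iff.mpr (fun j _ => h j)
    omega
  obtain ⟨k, hvk⟩ := hk
  have hvkR : (v k : ℝ) ≠ 0 := Int.cast_ne_zero.mpr hvk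
  set t : ℝ := (Φ i k : ℝ) / (v k : ℝ) with ht
  have hmv : ∀ y : Fin n → ℝ, (A.mulVec y + c) i
      = (∑ j, (Φ i j : ℝ) * y j) + c i := by
    intro y
    simp [hA, Matrix.mulVec, dotProduct, Matrix.map_apply]
  have key : ∀ x : Fin n → ℝ,
      (∑ j, (Φ i j : ℝ) * x j) + c i = t * ((∑ j, x j * (v j : ℝ)) + lam) := by
    intro x
    set g : ℝ := (∑ j, x j * (v j : ℝ)) + lam with hg
    set s : ℝ := g / (v k : ℝ) with hs
    set y : Fin n → ℝ := fun j => x j - (if j = k then s else 0) with hy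
    have hgy : (∑ j, y j * (v j : ℝ)) + lam = 0 := by
      have h5 : (∑ j, y j * (v j : ℝ))
          = (∑ j, x j * (v j : ℝ)) - s * (v k : ℝ) := by
        simp [hy, sub_mul, Finset.sum_sub_distrib, ite_mul]
      rw [h5, hs, div_mul_cancel₀ _ hvkR, hg]
      ring
    have hfy : (∑ j, (Φ i j : ℝ) * y j) + c i = 0 := by
      rw [← hmv]
      exact (h0 y).mp hgy
    have hfy2 : (∑ j, (Φ i j : ℝ) * y j)
        = (∑ j, (Φ i j : ℝ) * x j) - (Φ i k : ℝ) * s := by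
      simp [hy, mul_sub, Finset.sum_sub_distrib, mul_ite]
    rw [hfy2] at hfy
    have h6 : (∑ j, (Φ i j : ℝ) * x j) + c i = (Φ i k : ℝ) * s := by linarith
    rw [h6, hs, ht, hg]
    ring
  have hentry : ∀ j, (Φ i j : ℝ) = t * (v j : ℝ) := by
    intro j
    have h1 := key (Pi.single j 1)
    have h2 := key 0
    simp [Pi.single_apply] at h1 h2
    have h7 : (Φ i j : ℝ) = t * ((v j : ℝ) + lam) - t * lam := by linarith
    rw [h7]; ring
  set m : ℤ := ∑ j, v j * B j i with hm
  have hmt : t * (m : ℝ) = 1 := by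
    have h1 : (∑ j, Φ i j * B j i) = 1 := by
      have h8 := congrFun (congrFun hΦB i) i
      simpa [Matrix.mul_apply, Matrix.one_apply] using h8
    have h2 : ((∑ j, Φ i j * B j i : ℤ) : ℝ) = 1 := by exact_mod_cast h1
    push_cast [hm]
    push_cast at h2
    rw [← h2, Finset.mul_sum]
    apply Finset.sum_congr rfl
    intro j _
    rw [hentry j]
    ring
  have hmdvd : ∀ j, m ∣ v j := by
    intro j
    have h9 : ((Φ i j * m : ℤ) : ℝ) = ((v j : ℤ) : ℝ) := by
      push_cast
      calc ((Φ i j : ℤ) : ℝ) * (m : ℝ) = (t * (v j : ℝ)) * m := by rw [hentry j]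
        _ = (v j : ℝ) * (t * (m : ℝ)) := by ring
        _ = (v j : ℝ) := by rw [hmt]; ring
    have h10 : Φ i j * m = v j := by exact_mod_cast h9
    exact Dvd.intro_left _ h10
  have hmunit : m = 1 ∨ m = -1 := by
    have h11 : m ∣ Finset.univ.gcd v := Finset.dvd_gcd (fun j _ => hmdvd j)
    rw [hv] at h11
    rcases Int.isUnit_iff.mp (isUnit_of_dvd_one h11) with h | h
    · exact Or.inl h
    · exact Or.inr h
  have habs : |t| = 1 := by
    rcases hmunit with h | h <;> rw [h] at hmt
    · simp at hmt; simp [hmt]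
    · have h12 : t = -1 := by push_cast at hmt; linarith
      simp [h12]
  intro x
  have hgo : ((Φ.map (fun m : ℤ => (m : ℝ))).mulVec x + c) i = (A.mulVec x + c) i := rfl
  rw [hgo, hmv x, key x, abs_mul, habs, one_mul]
end
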